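/- Suppose Q ∈ ℂ[z,w] is a polynomial such that Q(z, z̄) is real and strictly positive for all z ∈ ℂ, and suppose (1+zw)^α · e^{f(z)+g(w)} = Q(z,w)^λ holds for all (z,w) in a nonempty open subset of ℂ² containing a point of {w = z̄}, where α, λ > 0 are real, f is entire in z and g entire in w, and the powers are given by a fixed branch. If the zero set of Q in ℂ² is nonempty, then it coincides with the zero set of 1+zw. -/

import Mathlib

open MvPolynomial Complex

/-- Evaluation of a two-variable polynomial at a point of `ℂ²`. -/
noncomputable def eval2 (Q : MvPolynomial (Fin 2) ℂ) (p : ℂ × ℂ) : ℂ :=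
  eval (fun i => if i = 0 then p.1 else p.2) Q

namespace ZeroSetAux

open Polynomial

lemma rep1 (Q : MvPolynomial (Fin 2) ℂ) :
    ∃ B : Polynomial (Polynomial ℂ), ∀ z w : ℂ,
      MvPolynomial.eval (fun i => if i = 0 then z else w) Q
        = Polynomial.eval₂ (Polynomial.evalRingHom w) z B := by
  induction Q using MvPolynomial.induction_on with
  | C a => exact ⟨Polynomial.C (Polynomial.C a), fun z w => by simp⟩
  | add p q hp hq =>
      obtain ⟨B1, h1⟩ := hp; obtain ⟨B2, h2⟩ := hq
      exact ⟨B1 + B2, fun z w => by simp [h1, h2]⟩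
  | mul_X p i hp =>
      obtain ⟨B1, h1⟩ := hp
      refine ⟨B1 * (if i = 0 then Polynomial.X else Polynomial.C Polynomial.X), fun z w => ?_⟩
      fin_cases i <;> simp [h1]

lemma rep2 (Q : MvPolynomial (Fin 2) ℂ) :
    ∃ B : Polynomial (Polynomial ℂ), ∀ z w : ℂ,
      MvPolynomial.eval (fun i => if i = 0 then z else w) Q
        = Polynomial.eval₂ (Polynomial.evalRingHom z) w B := by
  induction Q using MvPolynomial.induction_on with
  | C a => exact ⟨Polynomial.C (Polynomial.C a), fun z w => by simp⟩
  | add p q hp hq =>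
      obtain ⟨B1, h1⟩ := hp; obtain ⟨B2, h2⟩ := hq
      exact ⟨B1 + B2, fun z w => by simp [h1, h2]⟩
  | mul_X p i hp =>
      obtain ⟨B1, h1⟩ := hp
      refine ⟨B1 * (if i = 0 then Polynomial.C Polynomial.X else Polynomial.X), fun z w => ?_⟩
      fin_cases i <;> simp [h1]

lemma analytic_eval2 (C : Polynomial (Polynomial ℂ)) :
    AnalyticOnNhd ℂ (fun p : ℂ × ℂ => Polynomial.eval₂ (Polynomial.evalRingHom p.2) p.1 C)
      Set.univ := by
  induction C using Polynomial.induction_on' with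
  | add p q hp hq =>
      have := hp.add hq
      simpa [Polynomial.eval₂_add, Pi.add_def] using this
  | monomial n a =>
      intro x hx
      have h1 : AnalyticAt ℂ (fun p : ℂ × ℂ => Polynomial.eval p.2 a) x := by
        have := AnalyticAt.aeval_polynomial (𝕜 := ℂ) (A := ℂ) (analyticAt_snd (p := x)) a
        simpa using this
      have h2 : AnalyticAt ℂ (fun p : ℂ × ℂ => p.1 ^ n) x := (analyticAt_fst (p := x)).pow n
      have := h1.mul h2
      simpa [Polynomial.eval₂_monomial, Pi.mul_def] using this

lemma analytic_eval2' (C : Polynomial (Polynomial ℂ)) :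
    AnalyticOnNhd ℂ (fun p : ℂ × ℂ => Polynomial.eval₂ (Polynomial.evalRingHom p.1) p.2 C)
      Set.univ := by
  induction C using Polynomial.induction_on' with
  | add p q hp hq =>
      have := hp.add hq
      simpa [Polynomial.eval₂_add, Pi.add_def] using this
  | monomial n a =>
      intro x hx
      have h1 : AnalyticAt ℂ (fun p : ℂ × ℂ => Polynomial.eval p.1 a) x := by
        have := AnalyticAt.aeval_polynomial (𝕜 := ℂ) (A := ℂ) (analyticAt_fst (p := x)) a
        simpa using this
      have h2 : AnalyticAt ℂ (fun p : ℂ × ℂ => p.2 ^ n) x := (analyticAt_snd (p := x)).pow n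
      have := h1.mul h2
      simpa [Polynomial.eval₂_monomial, Pi.mul_def] using this

lemma poly_zero_of_ode (q : Polynomial ℂ) (u : ℂ → ℂ) (hu : Continuous u)
    (lam c a : ℂ) (hlam : lam ≠ 0)
    (hid : ∀ t : ℂ, u t * q.eval t = lam * (1 + t * c) * q.derivative.eval t)
    (ha : q.eval a = 0) (hca : 1 + a * c ≠ 0) : q = 0 := by
  by_contra hq
  obtain ⟨r, hfac, hnd⟩ := q.exists_eq_pow_rootMultiplicity_mul_and_not_dvd hq a
  set k := Polynomial.rootMultiplicity a q with hk
  have hkpos : 0 < k := (Polynomial.rootMultiplicity_pos hq).2 ha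
  have hra : r.eval a ≠ 0 := fun h => hnd (Polynomial.dvd_iff_isRoot.2 h)
  have hder : q.derivative
      = (Polynomial.C (k : ℂ)) * (Polynomial.X - Polynomial.C a) ^ (k - 1) * r
        + (Polynomial.X - Polynomial.C a) ^ k * r.derivative := by
    rw [hfac, Polynomial.derivative_mul, Polynomial.derivative_pow,
      Polynomial.derivative_X_sub_C]
    ring
  set G : ℂ → ℂ := fun t =>
    lam * (1 + t * c) * ((k : ℂ) * r.eval t + (t - a) * r.derivative.eval t)
      - u t * ((t - a) * r.eval t) with hG
  have hc1 : Continuous fun t : ℂ => r.eval t := r.continuous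
  have hc2 : Continuous fun t : ℂ => r.derivative.eval t := r.derivative.continuous
  have hGcont : Continuous G := by
    refine Continuous.sub ?_ ?_
    · exact (continuous_const.mul (continuous_const.add (continuous_id.mul
        continuous_const))).mul ((continuous_const.mul hc1).add
          ((continuous_id.sub continuous_const).mul hc2))
    · exact hu.mul ((continuous_id.sub continuous_const).mul hc1)
  have hGzero : ∀ t : ℂ, t ≠ a → G t = 0 := by
    intro t ht
    have hta : (t - a) ≠ 0 := sub_ne_zero.2 ht
    have h1 := hid t
    rw [hder, hfac] at h1
    simp only [Polynomial.eval_add, Polynomial.eval_mul, Polynomial.eval_pow,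
      Polynomial.eval_sub, Polynomial.eval_X, Polynomial.eval_C] at h1
    have hpow : (t - a) ^ k = (t - a) ^ (k - 1) * (t - a) := by
      conv_lhs => rw [show k = (k - 1) + 1 by omega]
      ring
    rw [hpow] at h1
    have h2 : (t - a) ^ (k - 1) * (u t * ((t - a) * r.eval t))
        = (t - a) ^ (k - 1) *
            (lam * (1 + t * c) * ((k : ℂ) * r.eval t + (t - a) * r.derivative.eval t)) := by
      linear_combination h1
    have h3 := mul_left_cancel₀ (pow_ne_zero _ hta) h2
    rw [hG]
    linear_combination -h3
  have hdense : Dense ({a}ᶜ : Set ℂ) := dense_compl_singleton a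
  have hGeq : G = fun _ => (0 : ℂ) :=
    hGcont.ext_on hdense continuous_const (fun t ht => hGzero t ht)
  have hGa : G a = 0 := by rw [hGeq]
  rw [hG] at hGa
  simp only [sub_self, zero_mul, mul_zero, sub_zero, add_zero] at hGa
  have hfin : lam * (1 + a * c) * ((k : ℂ) * r.eval a) = 0 := by
    simpa using hGa
  have hkne : (k : ℂ) ≠ 0 := Nat.cast_ne_zero.2 hkpos.ne'
  simp only [mul_eq_zero] at hfin
  tauto

end ZeroSetAux

open ZeroSetAux Polynomial

/-- Complexification step: if `(1+zw)^α·e^{f(z)+g(w)} = Q(z,w)^λ` on an open set meeting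
`{w = z̄}`, with `Q(z,z̄)` real positive, `α, λ > 0`, `f, g` entire, then a nonempty zero
set of `Q` in ℂ² coincides with the zero set of `1+zw`. -/
theorem zero_set_eq_of_complexification (Q : MvPolynomial (Fin 2) ℂ)
    (hreal : ∀ z : ℂ, (eval2 Q (z, (starRingEnd ℂ) z)).im = 0)
    (hpos : ∀ z : ℂ, 0 < (eval2 Q (z, (starRingEnd ℂ) z)).re)
    (α lam : ℝ) (hα : 0 < α) (hlam : 0 < lam)
    (f g : ℂ → ℂ) (hf : Differentiable ℂ f) (hg : Differentiable ℂ g)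
    (U : Set (ℂ × ℂ)) (hU : IsOpen U)
    (hdiag : ∃ z₀ : ℂ, (z₀, (starRingEnd ℂ) z₀) ∈ U)
    (heq : ∀ p ∈ U,
      (1 + p.1 * p.2) ^ (α : ℂ) * Complex.exp (f p.1 + g p.2) =
        (eval2 Q p) ^ (lam : ℂ))
    (hne : {p : ℂ × ℂ | eval2 Q p = 0}.Nonempty) :
    {p : ℂ × ℂ | eval2 Q p = 0} = {p : ℂ × ℂ | 1 + p.1 * p.2 = 0} := by
  obtain ⟨z₀, hz₀U⟩ := hdiag
  obtain ⟨B, hB⟩ := rep1 Q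
  obtain ⟨B', hB'⟩ := rep2 Q
  have hαc : (α : ℂ) ≠ 0 := by exact_mod_cast hα.ne'
  have hlc : (lam : ℂ) ≠ 0 := by exact_mod_cast hlam.ne'
  have hBe : ∀ p : ℂ × ℂ,
      eval2 Q p = Polynomial.eval p.1 (B.map (Polynomial.evalRingHom p.2)) := fun p => by
    rw [eval2, hB p.1 p.2, Polynomial.eval₂_eq_eval_map]
  have hB'e : ∀ p : ℂ × ℂ,
      eval2 Q p = Polynomial.eval p.2 (B'.map (Polynomial.evalRingHom p.1)) := fun p => by
    rw [eval2, hB' p.1 p.2, Polynomial.eval₂_eq_eval_map]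
  -- analyticity / continuity of building blocks
  have hfa : AnalyticOnNhd ℂ f Set.univ :=
    (hf.differentiableOn).analyticOnNhd isOpen_univ
  have hga : AnalyticOnNhd ℂ g Set.univ :=
    (hg.differentiableOn).analyticOnNhd isOpen_univ
  have hdf : AnalyticOnNhd ℂ (deriv f) Set.univ := hfa.deriv
  have hdg : AnalyticOnNhd ℂ (deriv g) Set.univ := hga.deriv
  have hdfc : Continuous (deriv f) := by
    rw [← continuousOn_univ]; exact hdf.continuousOn
  have hdgc : Continuous (deriv g) := by
    rw [← continuousOn_univ]; exact hdg.continuousOn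
  have hFanal : AnalyticOnNhd ℂ (fun p : ℂ × ℂ => eval2 Q p) Set.univ := by
    have h := analytic_eval2 B
    have : (fun p : ℂ × ℂ => eval2 Q p)
        = fun p : ℂ × ℂ => Polynomial.eval₂ (Polynomial.evalRingHom p.2) p.1 B :=
      funext fun p => by rw [eval2, hB p.1 p.2]
    rw [this]; exact h
  have hFcont : Continuous (fun p : ℂ × ℂ => eval2 Q p) := by
    rw [← continuousOn_univ]; exact hFanal.continuousOn
  -- the open set V
  set V : Set (ℂ × ℂ) := (U ∩ ((fun p : ℂ × ℂ => eval2 Q p) ⁻¹' Complex.slitPlane))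
      ∩ ((fun p : ℂ × ℂ => 1 + p.1 * p.2) ⁻¹' Complex.slitPlane) with hV
  have hVopen : IsOpen V :=
    ((hU.inter (isOpen_slitPlane.preimage hFcont)).inter
      (isOpen_slitPlane.preimage (by continuity)))
  have hx₀V : (z₀, (starRingEnd ℂ) z₀) ∈ V := by
    refine ⟨⟨hz₀U, ?_⟩, ?_⟩
    · exact Or.inl (hpos z₀)
    · show (1 + z₀ * (starRingEnd ℂ) z₀) ∈ Complex.slitPlane
      left
      rw [Complex.mul_conj]
      simp only [Complex.add_re, Complex.one_re, Complex.ofReal_re]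
      have := Complex.normSq_nonneg z₀
      linarith
  -- identity A on V
  have hA : ∀ p ∈ V,
      ((α : ℂ) * p.2 + (1 + p.1 * p.2) * deriv f p.1) * eval2 Q p
        = (lam : ℂ) * (1 + p.1 * p.2)
            * Polynomial.eval p.1 (B.derivative.map (Polynomial.evalRingHom p.2)) := by
    rintro ⟨z, w⟩ hp
    obtain ⟨⟨hpU, hpQ⟩, hp1⟩ := hp
    simp only [Set.mem_preimage] at hpQ hp1
    set b : ℂ := 1 + z * w with hbdef
    set e : ℂ := Complex.exp (f z + g w) with hedef
    set pw : Polynomial ℂ := B.map (Polynomial.evalRingHom w) with hpw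
    have hQv' : ∀ z' : ℂ, eval2 Q (z', w) = pw.eval z' := fun z' => hBe (z', w)
    set Qv : ℂ := pw.eval z with hQvdef
    have hQvslit : Qv ∈ Complex.slitPlane := by
      rw [hQvdef, ← hQv' z]; exact hpQ
    have hb0 : b ≠ 0 := Complex.slitPlane_ne_zero hp1
    have hQv0 : Qv ≠ 0 := Complex.slitPlane_ne_zero hQvslit
    have h1 : HasDerivAt (fun z' : ℂ => 1 + z' * w) w z := by
      simpa using ((hasDerivAt_id z).mul_const w).const_add 1
    have h2 : HasDerivAt (fun z' : ℂ => (1 + z' * w) ^ (α : ℂ))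
        ((α : ℂ) * b ^ ((α : ℂ) - 1) * w) z := h1.cpow_const hp1
    have h3 : HasDerivAt (fun z' : ℂ => Complex.exp (f z' + g w)) (e * deriv f z) z :=
      (((hf z).hasDerivAt).add_const (g w)).cexp
    have hL : HasDerivAt (fun z' : ℂ => (1 + z' * w) ^ (α : ℂ) * Complex.exp (f z' + g w))
        (((α : ℂ) * b ^ ((α : ℂ) - 1) * w) * e + b ^ (α : ℂ) * (e * deriv f z)) z := h2.mul h3
    have hq : HasDerivAt (fun z' : ℂ => pw.eval z') (pw.derivative.eval z) z := pw.hasDerivAt z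
    have hR : HasDerivAt (fun z' : ℂ => (pw.eval z') ^ (lam : ℂ))
        ((lam : ℂ) * Qv ^ ((lam : ℂ) - 1) * pw.derivative.eval z) z := hq.cpow_const hQvslit
    have hS : {z' : ℂ | (z', w) ∈ U} ∈ nhds z :=
      (hU.preimage (continuous_id.prodMk continuous_const)).mem_nhds hpU
    have hEv : (fun z' : ℂ => (pw.eval z') ^ (lam : ℂ)) =ᶠ[nhds z]
        (fun z' : ℂ => (1 + z' * w) ^ (α : ℂ) * Complex.exp (f z' + g w)) := by
      filter_upwards [hS] with z' hz'
      rw [← hQv' z', ← heq (z', w) hz']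
    have hL2 : HasDerivAt (fun z' : ℂ => (pw.eval z') ^ (lam : ℂ))
        (((α : ℂ) * b ^ ((α : ℂ) - 1) * w) * e + b ^ (α : ℂ) * (e * deriv f z)) z :=
      hL.congr_of_eventuallyEq hEv
    have hd := hL2.unique hR
    have heqp : b ^ (α : ℂ) * e = Qv ^ (lam : ℂ) := by
      have := heq (z, w) hpU
      rw [hQv' z] at this
      exact this
    have hbα : b ^ (α : ℂ) = b ^ ((α : ℂ) - 1) * b := by
      conv_lhs => rw [show (α : ℂ) = ((α : ℂ) - 1) + 1 by ring]
      rw [Complex.cpow_add _ _ hb0, Complex.cpow_one]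
    have hQl : Qv ^ (lam : ℂ) = Qv ^ ((lam : ℂ) - 1) * Qv := by
      conv_lhs => rw [show (lam : ℂ) = ((lam : ℂ) - 1) + 1 by ring]
      rw [Complex.cpow_add _ _ hQv0, Complex.cpow_one]
    have hT : Qv ^ (lam : ℂ) ≠ 0 := by
      rw [Ne, Complex.cpow_eq_zero_iff]
      rintro ⟨h, -⟩; exact hQv0 h
    have key : (((α : ℂ) * w + b * deriv f z) * Qv) * Qv ^ (lam : ℂ)
        = ((lam : ℂ) * b * pw.derivative.eval z) * Qv ^ (lam : ℂ) := by
      linear_combination (b * Qv) * hd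
        - ((α : ℂ) * w * Qv + b * (deriv f z) * Qv) * heqp
        + ((α : ℂ) * w * Qv * e) * hbα
        - ((lam : ℂ) * b * (pw.derivative.eval z)) * hQl
    have main := mul_right_cancel₀ hT key
    show ((α : ℂ) * w + (1 + z * w) * deriv f z) * eval2 Q (z, w)
        = (lam : ℂ) * (1 + z * w)
            * Polynomial.eval z (B.derivative.map (Polynomial.evalRingHom w))
    rw [hQv' z, ← Polynomial.derivative_map]
    calc ((α : ℂ) * w + (1 + z * w) * deriv f z) * pw.eval z
        = ((lam : ℂ) * b * pw.derivative.eval z) := main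
      _ = (lam : ℂ) * (1 + z * w) * pw.derivative.eval z := by rw [hbdef]
  -- identity B on V (symmetric)
  have hA2 : ∀ p ∈ V,
      ((α : ℂ) * p.1 + (1 + p.1 * p.2) * deriv g p.2) * eval2 Q p
        = (lam : ℂ) * (1 + p.1 * p.2)
            * Polynomial.eval p.2 (B'.derivative.map (Polynomial.evalRingHom p.1)) := by
    rintro ⟨z, w⟩ hp
    obtain ⟨⟨hpU, hpQ⟩, hp1⟩ := hp
    simp only [Set.mem_preimage] at hpQ hp1
    set b : ℂ := 1 + z * w with hbdef
    set e : ℂ := Complex.exp (f z + g w) with hedef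
    set pz : Polynomial ℂ := B'.map (Polynomial.evalRingHom z) with hpz
    have hQv' : ∀ w' : ℂ, eval2 Q (z, w') = pz.eval w' := fun w' => hB'e (z, w')
    set Qv : ℂ := pz.eval w with hQvdef
    have hQvslit : Qv ∈ Complex.slitPlane := by
      rw [hQvdef, ← hQv' w]; exact hpQ
    have hb0 : b ≠ 0 := Complex.slitPlane_ne_zero hp1
    have hQv0 : Qv ≠ 0 := Complex.slitPlane_ne_zero hQvslit
    have h1 : HasDerivAt (fun w' : ℂ => 1 + z * w') z w := by
      simpa using ((hasDerivAt_id w).const_mul z).const_add 1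
    have h2 : HasDerivAt (fun w' : ℂ => (1 + z * w') ^ (α : ℂ))
        ((α : ℂ) * b ^ ((α : ℂ) - 1) * z) w := h1.cpow_const hp1
    have h3 : HasDerivAt (fun w' : ℂ => Complex.exp (f z + g w')) (e * deriv g w) w :=
      (((hg w).hasDerivAt).const_add (f z)).cexp
    have hL : HasDerivAt (fun w' : ℂ => (1 + z * w') ^ (α : ℂ) * Complex.exp (f z + g w'))
        (((α : ℂ) * b ^ ((α : ℂ) - 1) * z) * e + b ^ (α : ℂ) * (e * deriv g w)) w := h2.mul h3
    have hq : HasDerivAt (fun w' : ℂ => pz.eval w') (pz.derivative.eval w) w := pz.hasDerivAt w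
    have hR : HasDerivAt (fun w' : ℂ => (pz.eval w') ^ (lam : ℂ))
        ((lam : ℂ) * Qv ^ ((lam : ℂ) - 1) * pz.derivative.eval w) w := hq.cpow_const hQvslit
    have hS : {w' : ℂ | (z, w') ∈ U} ∈ nhds w :=
      (hU.preimage (continuous_const.prodMk continuous_id)).mem_nhds hpU
    have hEv : (fun w' : ℂ => (pz.eval w') ^ (lam : ℂ)) =ᶠ[nhds w]
        (fun w' : ℂ => (1 + z * w') ^ (α : ℂ) * Complex.exp (f z + g w')) := by
      filter_upwards [hS] with w' hw'
      rw [← hQv' w', ← heq (z, w') hw']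
    have hL2 : HasDerivAt (fun w' : ℂ => (pz.eval w') ^ (lam : ℂ))
        (((α : ℂ) * b ^ ((α : ℂ) - 1) * z) * e + b ^ (α : ℂ) * (e * deriv g w)) w :=
      hL.congr_of_eventuallyEq hEv
    have hd := hL2.unique hR
    have heqp : b ^ (α : ℂ) * e = Qv ^ (lam : ℂ) := by
      have := heq (z, w) hpU
      rw [hQv' w] at this
      exact this
    have hbα : b ^ (α : ℂ) = b ^ ((α : ℂ) - 1) * b := by
      conv_lhs => rw [show (α : ℂ) = ((α : ℂ) - 1) + 1 by ring]
      rw [Complex.cpow_add _ _ hb0, Complex.cpow_one]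
    have hQl : Qv ^ (lam : ℂ) = Qv ^ ((lam : ℂ) - 1) * Qv := by
      conv_lhs => rw [show (lam : ℂ) = ((lam : ℂ) - 1) + 1 by ring]
      rw [Complex.cpow_add _ _ hQv0, Complex.cpow_one]
    have hT : Qv ^ (lam : ℂ) ≠ 0 := by
      rw [Ne, Complex.cpow_eq_zero_iff]
      rintro ⟨h, -⟩; exact hQv0 h
    have key : (((α : ℂ) * z + b * deriv g w) * Qv) * Qv ^ (lam : ℂ)
        = ((lam : ℂ) * b * pz.derivative.eval w) * Qv ^ (lam : ℂ) := by
      linear_combination (b * Qv) * hd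
        - ((α : ℂ) * z * Qv + b * (deriv g w) * Qv) * heqp
        + ((α : ℂ) * z * Qv * e) * hbα
        - ((lam : ℂ) * b * (pz.derivative.eval w)) * hQl
    have main := mul_right_cancel₀ hT key
    show ((α : ℂ) * z + (1 + z * w) * deriv g w) * eval2 Q (z, w)
        = (lam : ℂ) * (1 + z * w)
            * Polynomial.eval w (B'.derivative.map (Polynomial.evalRingHom z))
    rw [hQv' w, ← Polynomial.derivative_map]
    calc ((α : ℂ) * z + (1 + z * w) * deriv g w) * pz.eval w
        = ((lam : ℂ) * b * pz.derivative.eval w) := main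
      _ = (lam : ℂ) * (1 + z * w) * pz.derivative.eval w := by rw [hbdef]
  -- two-argument evaluation formulas
  have hBe2 : ∀ z w : ℂ, eval2 Q (z, w)
      = Polynomial.eval z (B.map (Polynomial.evalRingHom w)) := fun z w => hBe (z, w)
  have hB'e2 : ∀ z w : ℂ, eval2 Q (z, w)
      = Polynomial.eval w (B'.map (Polynomial.evalRingHom z)) := fun z w => hB'e (z, w)
  -- globalize identity A
  have hfstA : AnalyticOnNhd ℂ (fun p : ℂ × ℂ => p.1) (Set.univ : Set (ℂ × ℂ)) :=
    fun x _ => analyticAt_fst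
  have hsndA : AnalyticOnNhd ℂ (fun p : ℂ × ℂ => p.2) (Set.univ : Set (ℂ × ℂ)) :=
    fun x _ => analyticAt_snd
  have IA : ∀ z w : ℂ,
      ((α : ℂ) * w + (1 + z * w) * deriv f z) * eval2 Q (z, w)
        = (lam : ℂ) * (1 + z * w)
            * Polynomial.eval z (B.derivative.map (Polynomial.evalRingHom w)) := by
    set D : ℂ × ℂ → ℂ := fun p =>
      ((α : ℂ) * p.2 + (1 + p.1 * p.2) * deriv f p.1) * eval2 Q p
        - (lam : ℂ) * (1 + p.1 * p.2)
            * Polynomial.eval p.1 (B.derivative.map (Polynomial.evalRingHom p.2)) with hD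
    have h1 : AnalyticOnNhd ℂ
        (fun p : ℂ × ℂ => Polynomial.eval p.1 (B.derivative.map (Polynomial.evalRingHom p.2)))
        Set.univ := by
      have h := analytic_eval2 B.derivative
      have e : (fun p : ℂ × ℂ =>
            Polynomial.eval p.1 (B.derivative.map (Polynomial.evalRingHom p.2)))
          = fun p : ℂ × ℂ => Polynomial.eval₂ (Polynomial.evalRingHom p.2) p.1 B.derivative :=
        funext fun p => (Polynomial.eval₂_eq_eval_map _).symm
      rw [e]; exact h
    have hdffst : AnalyticOnNhd ℂ (fun p : ℂ × ℂ => deriv f p.1) Set.univ := fun x _ =>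
      (hdf x.1 trivial).comp analyticAt_fst
    have hDanal : AnalyticOnNhd ℂ D Set.univ := by
      apply AnalyticOnNhd.sub
      · exact ((analyticOnNhd_const.mul hsndA).add
          ((analyticOnNhd_const.add (hfstA.mul hsndA)).mul hdffst)).mul hFanal
      · exact (analyticOnNhd_const.mul
          (analyticOnNhd_const.add (hfstA.mul hsndA))).mul h1
    have hev : D =ᶠ[nhds (z₀, (starRingEnd ℂ) z₀)] 0 := by
      filter_upwards [hVopen.mem_nhds hx₀V] with p hp
      have := hA p hp
      simp only [hD, Pi.zero_apply]
      rw [sub_eq_zero]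
      exact this
    have hzero : Set.EqOn D 0 Set.univ :=
      hDanal.eqOn_zero_of_preconnected_of_eventuallyEq_zero isPreconnected_univ
        (Set.mem_univ _) hev
    intro z w
    have h := hzero (Set.mem_univ (z, w))
    simp only [hD, Pi.zero_apply] at h
    rw [sub_eq_zero] at h
    exact h
  -- globalize identity B
  have IB : ∀ z w : ℂ,
      ((α : ℂ) * z + (1 + z * w) * deriv g w) * eval2 Q (z, w)
        = (lam : ℂ) * (1 + z * w)
            * Polynomial.eval w (B'.derivative.map (Polynomial.evalRingHom z)) := by
    set D : ℂ × ℂ → ℂ := fun p =>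
      ((α : ℂ) * p.1 + (1 + p.1 * p.2) * deriv g p.2) * eval2 Q p
        - (lam : ℂ) * (1 + p.1 * p.2)
            * Polynomial.eval p.2 (B'.derivative.map (Polynomial.evalRingHom p.1)) with hD
    have h1 : AnalyticOnNhd ℂ
        (fun p : ℂ × ℂ => Polynomial.eval p.2 (B'.derivative.map (Polynomial.evalRingHom p.1)))
        Set.univ := by
      have h := analytic_eval2' B'.derivative
      have e : (fun p : ℂ × ℂ =>
            Polynomial.eval p.2 (B'.derivative.map (Polynomial.evalRingHom p.1)))
          = fun p : ℂ × ℂ => Polynomial.eval₂ (Polynomial.evalRingHom p.1) p.2 B'.derivative :=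
        funext fun p => (Polynomial.eval₂_eq_eval_map _).symm
      rw [e]; exact h
    have hdgsnd : AnalyticOnNhd ℂ (fun p : ℂ × ℂ => deriv g p.2) Set.univ := fun x _ =>
      (hdg x.2 trivial).comp analyticAt_snd
    have hDanal : AnalyticOnNhd ℂ D Set.univ := by
      apply AnalyticOnNhd.sub
      · exact ((analyticOnNhd_const.mul hfstA).add
          ((analyticOnNhd_const.add (hfstA.mul hsndA)).mul hdgsnd)).mul hFanal
      · exact (analyticOnNhd_const.mul
          (analyticOnNhd_const.add (hfstA.mul hsndA))).mul h1
    have hev : D =ᶠ[nhds (z₀, (starRingEnd ℂ) z₀)] 0 := by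
      filter_upwards [hVopen.mem_nhds hx₀V] with p hp
      have := hA2 p hp
      simp only [hD, Pi.zero_apply]
      rw [sub_eq_zero]
      exact this
    have hzero : Set.EqOn D 0 Set.univ :=
      hDanal.eqOn_zero_of_preconnected_of_eventuallyEq_zero isPreconnected_univ
        (Set.mem_univ _) hev
    intro z w
    have h := hzero (Set.mem_univ (z, w))
    simp only [hD, Pi.zero_apply] at h
    rw [sub_eq_zero] at h
    exact h
  -- conclusion
  ext ⟨z1, w1⟩
  simp only [Set.mem_setOf_eq]
  constructor
  · intro hQ0
    by_contra h1
    -- the z-slice at w = w1 vanishes identically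
    have hidz : ∀ t : ℂ,
        ((α : ℂ) * w1 + (1 + t * w1) * deriv f t) * (B.map (Polynomial.evalRingHom w1)).eval t
          = (lam : ℂ) * (1 + t * w1)
              * ((B.map (Polynomial.evalRingHom w1)).derivative).eval t := by
      intro t
      have h := IA t w1
      rw [hBe2 t w1] at h
      rw [Polynomial.derivative_map]
      exact h
    have hu : Continuous (fun t : ℂ => (α : ℂ) * w1 + (1 + t * w1) * deriv f t) := by
      exact continuous_const.add
        ((continuous_const.add (continuous_id.mul continuous_const)).mul hdfc)
    have hq0 : B.map (Polynomial.evalRingHom w1) = 0 :=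
      poly_zero_of_ode _ _ hu _ w1 z1 hlc hidz
        (by rw [← hBe2 z1 w1]; exact hQ0) h1
    have hline : ∀ t : ℂ, eval2 Q (t, w1) = 0 := fun t => by
      rw [hBe2 t w1, hq0]; simp
    -- all w-slices through the line vanish
    have hcol : ∀ t : ℂ, 1 + t * w1 ≠ 0 → ∀ s : ℂ, eval2 Q (t, s) = 0 := by
      intro t ht
      have hidw : ∀ s : ℂ,
          ((α : ℂ) * t + (1 + t * s) * deriv g s) * (B'.map (Polynomial.evalRingHom t)).eval s
            = (lam : ℂ) * (1 + s * t)
                * ((B'.map (Polynomial.evalRingHom t)).derivative).eval s := by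
        intro s
        have h := IB t s
        rw [hB'e2 t s] at h
        rw [Polynomial.derivative_map, show (1 : ℂ) + s * t = 1 + t * s by ring]
        exact h
      have hu' : Continuous (fun s : ℂ => (α : ℂ) * t + (1 + t * s) * deriv g s) := by
        exact continuous_const.add
          ((continuous_const.add (continuous_const.mul continuous_id)).mul hdgc)
      have hq0' : B'.map (Polynomial.evalRingHom t) = 0 :=
        poly_zero_of_ode _ _ hu' _ t w1 hlc hidw
          (by rw [← hB'e2 t w1]; exact hline t)
          (by rw [show (1 : ℂ) + w1 * t = 1 + t * w1 by ring]; exact ht)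
      intro s
      rw [hB'e2 t s, hq0']; simp
    -- contradiction with positivity at the diagonal point
    have hzero0 : eval2 Q (z₀, (starRingEnd ℂ) z₀) = 0 := by
      by_cases hw1 : w1 = 0
      · exact hcol z₀ (by simp [hw1]) _
      · have hdense : Dense ({-w1⁻¹}ᶜ : Set ℂ) := dense_compl_singleton _
        have hφ : Continuous (fun t : ℂ => eval2 Q (t, (starRingEnd ℂ) z₀)) :=
          hFcont.comp (continuous_id.prodMk continuous_const)
        have heq0 : (fun t : ℂ => eval2 Q (t, (starRingEnd ℂ) z₀)) = fun _ => 0 := by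
          apply hφ.ext_on hdense continuous_const
          intro t ht
          apply hcol t _ _
          intro hc
          apply ht
          simp only [Set.mem_singleton_iff]
          have h2 : t * w1 = -1 := by linear_combination hc
          apply mul_right_cancel₀ hw1
          rw [h2, show -w1⁻¹ * w1 = -1 by field_simp]
        exact congrFun heq0 z₀
    have := hpos z₀
    rw [hzero0] at this
    simp at this
  · intro h10
    have h := IA z1 w1
    rw [h10] at h
    simp only [zero_mul, mul_zero, add_zero] at h
    have hw1 : w1 ≠ 0 := by
      intro hw
      rw [hw] at h10
      simp at h10
    rcases mul_eq_zero.1 h with h' | h'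
    · rcases mul_eq_zero.1 h' with h'' | h''
      · exact absurd h'' hαc
      · exact absurd h'' hw1
    · exact h'
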